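/- arXiv:2202.06467 — 3 statements merged into one kernel-verified Lean document; each statement's English description precedes it below -/
import Mathlib

section
/- The function G_μ(α) = Φ(Φ^{-1}(1-α) - μ) on [0,1], where Φ is the standard Gaussian CDF and μ ≥ 0, is convex, continuous, non-increasing, and satisfies G_μ(α) ≤ 1 - α for all α ∈ [0,1]. -/
open ProbabilityTheory

/-- The standard Gaussian cumulative distribution function. -/
noncomputable def stdGaussianCDF (x : ℝ) : ℝ :=
  ((gaussianReal 0 1) (Set.Iic x)).toReal

/-- The trade-off function `G_μ` of μ-Gaussian Differential Privacy, extended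
continuously to the endpoints of `[0,1]`. -/
noncomputable def Gmu (μ α : ℝ) : ℝ :=
  if α ≤ 0 then 1
  else if 1 ≤ α then 0
  else stdGaussianCDF (Function.invFun stdGaussianCDF (1 - α) - μ)

open MeasureTheory Set Filter Real Topology

noncomputable def phi : ℝ → ℝ := gaussianPDFReal 0 1

lemma phi_pos (x : ℝ) : 0 < phi x := gaussianPDFReal_pos 0 1 x one_ne_zero

lemma phi_cont : Continuous phi := by
  unfold phi; rw [gaussianPDFReal_def]; fun_prop

lemma phi_integrable : Integrable phi := integrable_gaussianPDFReal 0 1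

lemma Phi_eq (x : ℝ) : stdGaussianCDF x = ∫ t in Iic x, phi t := by
  rw [stdGaussianCDF, gaussianReal_apply_eq_integral 0 one_ne_zero,
    ENNReal.toReal_ofReal (setIntegral_nonneg measurableSet_Iic
      fun t _ => gaussianPDFReal_nonneg 0 1 t)]
  rfl

lemma Phi_sub (a b : ℝ) : stdGaussianCDF b - stdGaussianCDF a = ∫ t in a..b, phi t := by
  rw [Phi_eq, Phi_eq]
  exact intervalIntegral.integral_Iic_sub_Iic phi_integrable.integrableOn phi_integrable.integrableOn

lemma Phi_strictMono : StrictMono stdGaussianCDF := by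
  intro a b hab
  have h : 0 < ∫ t in a..b, phi t :=
    intervalIntegral.intervalIntegral_pos_of_pos (phi_cont.intervalIntegrable a b) phi_pos hab
  have := Phi_sub a b
  linarith

lemma Phi_cont : Continuous stdGaussianCDF := by
  have h := intervalIntegral.continuous_primitive (μ := volume) (fun a b => phi_cont.intervalIntegrable a b) 0
  exact (continuous_const.add h).congr fun x => by
    show stdGaussianCDF 0 + ∫ t in (0:ℝ)..x, phi t = stdGaussianCDF x
    rw [← Phi_sub]; ring

lemma Phi_mem (x : ℝ) : stdGaussianCDF x ∈ Ioo (0:ℝ) 1 := by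
  have h0 : (0:ℝ) ≤ stdGaussianCDF (x-1) := by
    rw [Phi_eq]; exact setIntegral_nonneg measurableSet_Iic fun t _ => (phi_pos t).le
  have h1 : stdGaussianCDF (x+1) ≤ 1 := by
    rw [stdGaussianCDF]
    exact ENNReal.toReal_le_of_le_ofReal zero_le_one (by simpa using prob_le_one)
  exact ⟨lt_of_le_of_lt h0 (Phi_strictMono (by linarith)),
    lt_of_lt_of_le (Phi_strictMono (by linarith)) h1⟩

lemma Phi_eq_cdf : stdGaussianCDF = ⇑(cdf (gaussianReal 0 1)) := by
  ext x; rw [stdGaussianCDF, cdf_eq_real]; rfl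

lemma Phi_tendsto_atTop : Tendsto stdGaussianCDF atTop (𝓝 1) := by
  rw [Phi_eq_cdf]; exact tendsto_cdf_atTop _

lemma Phi_tendsto_atBot : Tendsto stdGaussianCDF atBot (𝓝 0) := by
  rw [Phi_eq_cdf]; exact tendsto_cdf_atBot _

lemma Phi_surj {y : ℝ} (hy : y ∈ Ioo (0:ℝ) 1) : ∃ x, stdGaussianCDF x = y := by
  obtain ⟨a, ha⟩ := (Phi_tendsto_atBot.eventually_lt_const hy.1).exists
  obtain ⟨b, hb⟩ := (Phi_tendsto_atTop.eventually_const_lt hy.2).exists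
  exact intermediate_value_univ a b Phi_cont ⟨ha.le, hb.le⟩

lemma Phi_invFun {y : ℝ} (hy : y ∈ Ioo (0:ℝ) 1) :
    stdGaussianCDF (Function.invFun stdGaussianCDF y) = y :=
  Function.invFun_eq (Phi_surj hy)

lemma phi_shift (μ t : ℝ) : phi (t - μ) = phi t * Real.exp (μ * t - μ^2 / 2) := by
  simp only [phi, gaussianPDFReal]
  have h : rexp (-(t - 0) ^ 2 / (2 * ((1:NNReal):ℝ))) * rexp (μ * t - μ ^ 2 / 2)
      = rexp (-(t - μ - 0) ^ 2 / (2 * ((1:NNReal):ℝ))) := by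
    rw [← Real.exp_add]; congr 1; push_cast; ring
  rw [mul_assoc ((√(2 * π * ((1:NNReal):ℝ)))⁻¹) _ _, h]

lemma key (μ : ℝ) (hμ : 0 ≤ μ) (s x : ℝ) :
    Real.exp (μ * s - μ^2/2) * (stdGaussianCDF x - stdGaussianCDF s)
      ≤ stdGaussianCDF (x - μ) - stdGaussianCDF (s - μ) := by
  have hint1 : IntervalIntegrable (fun t => phi (t - μ)) volume s x :=
    (phi_cont.comp (continuous_id.sub continuous_const)).intervalIntegrable s x
  have hint2 : IntervalIntegrable (fun t => Real.exp (μ * s - μ^2/2) * phi t) volume s x :=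
    (continuous_const.mul phi_cont).intervalIntegrable s x
  have hR : stdGaussianCDF (x - μ) - stdGaussianCDF (s - μ) = ∫ t in s..x, phi (t - μ) := by
    rw [Phi_sub, intervalIntegral.integral_comp_sub_right _ μ]
  have hL : Real.exp (μ * s - μ^2/2) * (stdGaussianCDF x - stdGaussianCDF s)
      = ∫ t in s..x, Real.exp (μ * s - μ^2/2) * phi t := by
    rw [Phi_sub, intervalIntegral.integral_const_mul]
  rw [hR, hL, ← sub_nonneg, ← intervalIntegral.integral_sub hint1 hint2]
  rcases le_total s x with h | h
  · apply intervalIntegral.integral_nonneg h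
    intro t ht
    rw [phi_shift]
    have h2 : Real.exp (μ*s - μ^2/2) ≤ Real.exp (μ*t - μ^2/2) :=
      Real.exp_le_exp.mpr (by nlinarith [ht.1])
    nlinarith [phi_pos t]
  · rw [intervalIntegral.integral_symm, neg_nonneg, ← neg_nonneg,
      ← intervalIntegral.integral_neg]
    apply intervalIntegral.integral_nonneg h
    intro t ht
    rw [phi_shift]
    have h2 : Real.exp (μ*t - μ^2/2) ≤ Real.exp (μ*s - μ^2/2) :=
      Real.exp_le_exp.mpr (by nlinarith [ht.2])
    nlinarith [phi_pos t]

lemma Gmu_zero (μ : ℝ) : Gmu μ 0 = 1 := by simp [Gmu]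

lemma Gmu_one (μ : ℝ) : Gmu μ 1 = 0 := by norm_num [Gmu]

lemma Gmu_interior (μ α : ℝ) (h0 : 0 < α) (h1 : α < 1) :
    Gmu μ α = stdGaussianCDF (Function.invFun stdGaussianCDF (1 - α) - μ) := by
  rw [Gmu, if_neg (by linarith), if_neg (by linarith)]

lemma Gmu_nonneg (μ α : ℝ) : 0 ≤ Gmu μ α := by
  rw [Gmu]; split_ifs
  · norm_num
  · norm_num
  · exact (Phi_mem _).1.le

lemma Gmu_le_one (μ α : ℝ) : Gmu μ α ≤ 1 := by
  rw [Gmu]; split_ifs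
  · norm_num
  · norm_num
  · exact (Phi_mem _).2.le

lemma support (μ : ℝ) (hμ : 0 ≤ μ) (s : ℝ) {α : ℝ} (hα : α ∈ Icc (0:ℝ) 1) :
    stdGaussianCDF (s - μ) + Real.exp (μ * s - μ^2/2) * ((1 - stdGaussianCDF s) - α)
      ≤ Gmu μ α := by
  set c := Real.exp (μ * s - μ^2/2) with hc
  rcases lt_or_ge 0 α with h0 | h0
  · rcases lt_or_ge α 1 with h1 | h1
    · -- interior
      rw [Gmu_interior μ α h0 h1]
      have hmem : (1 - α) ∈ Ioo (0:ℝ) 1 := ⟨by linarith, by linarith⟩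
      have hx := Phi_invFun hmem
      have hk := key μ hμ s (Function.invFun stdGaussianCDF (1 - α))
      rw [hx] at hk
      linarith
    · -- α = 1
      have hα1 : α = 1 := le_antisymm hα.2 h1
      subst hα1
      rw [Gmu_one]
      have hlim1 : Tendsto (fun x => c * (stdGaussianCDF x - stdGaussianCDF s))
          atBot (𝓝 (c * (0 - stdGaussianCDF s))) :=
        ((Phi_tendsto_atBot.sub tendsto_const_nhds).const_mul c)
      have hlim2 : Tendsto (fun x => stdGaussianCDF (x - μ) - stdGaussianCDF (s - μ))
          atBot (𝓝 (0 - stdGaussianCDF (s - μ))) :=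
        ((Phi_tendsto_atBot.comp (tendsto_atBot_add_const_right _ (-μ) tendsto_id)).sub
          tendsto_const_nhds)
      have := le_of_tendsto_of_tendsto' hlim1 hlim2 (fun x => key μ hμ s x)
      linarith
  · -- α = 0
    have hα0 : α = 0 := le_antisymm h0 hα.1
    subst hα0
    rw [Gmu_zero]
    have hlim1 : Tendsto (fun x => c * (stdGaussianCDF x - stdGaussianCDF s))
        atTop (𝓝 (c * (1 - stdGaussianCDF s))) :=
      ((Phi_tendsto_atTop.sub tendsto_const_nhds).const_mul c)
    have hlim2 : Tendsto (fun x => stdGaussianCDF (x - μ) - stdGaussianCDF (s - μ))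
        atTop (𝓝 (1 - stdGaussianCDF (s - μ))) :=
      ((Phi_tendsto_atTop.comp (tendsto_atTop_add_const_right _ (-μ) tendsto_id)).sub
        tendsto_const_nhds)
    have := le_of_tendsto_of_tendsto' hlim1 hlim2 (fun x => key μ hμ s x)
    linarith

lemma Gmu_le_linear (μ : ℝ) (hμ : 0 ≤ μ) {α : ℝ} (hα : α ∈ Icc (0:ℝ) 1) :
    Gmu μ α ≤ 1 - α := by
  rcases lt_or_ge 0 α with h0 | h0
  · rcases lt_or_ge α 1 with h1 | h1
    · rw [Gmu_interior μ α h0 h1]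
      have hmem : (1 - α) ∈ Ioo (0:ℝ) 1 := ⟨by linarith, by linarith⟩
      have hx := Phi_invFun hmem
      calc stdGaussianCDF (Function.invFun stdGaussianCDF (1 - α) - μ)
          ≤ stdGaussianCDF (Function.invFun stdGaussianCDF (1 - α)) :=
            Phi_strictMono.monotone (by linarith)
        _ = 1 - α := hx
    · have h : α = 1 := le_antisymm hα.2 h1
      subst h; rw [Gmu_one]; norm_num
  · have h : α = 0 := le_antisymm h0 hα.1
    subst h; rw [Gmu_zero]; norm_num

lemma Gmu_convex (μ : ℝ) (hμ : 0 ≤ μ) : ConvexOn ℝ (Icc 0 1) (Gmu μ) := by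
  refine ⟨convex_Icc 0 1, ?_⟩
  intro a ha b hb ta tb hta htb htab
  simp only [smul_eq_mul]
  set γ := ta * a + tb * b with hγdef
  have hγmem : γ ∈ Icc (0:ℝ) 1 := (convex_Icc (0:ℝ) 1) ha hb hta htb htab
  rcases lt_or_ge 0 γ with h0 | h0
  · rcases lt_or_ge γ 1 with h1 | h1
    · -- interior
      set x := Function.invFun stdGaussianCDF (1 - γ) with hxdef
      have hmem : (1 - γ) ∈ Ioo (0:ℝ) 1 := ⟨by linarith, by linarith⟩
      have hx : stdGaussianCDF x = 1 - γ := Phi_invFun hmem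
      have hGγ : Gmu μ γ = stdGaussianCDF (x - μ) := Gmu_interior μ γ h0 h1
      set c := Real.exp (μ * x - μ^2/2) with hcdef
      have hA := support μ hμ x ha
      have hB := support μ hμ x hb
      rw [hx] at hA hB
      set P := stdGaussianCDF (x - μ) with hPdef
      have hexp : ta * (P + c * ((1 - (1 - γ)) - a)) + tb * (P + c * ((1 - (1 - γ)) - b))
          = P := by
        linear_combination (P + c * γ) * htab + c * hγdef
      calc Gmu μ γ = P := hGγ
        _ = ta * (P + c * ((1 - (1 - γ)) - a)) + tb * (P + c * ((1 - (1 - γ)) - b)) :=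
            hexp.symm
        _ ≤ ta * Gmu μ a + tb * Gmu μ b :=
            add_le_add (mul_le_mul_of_nonneg_left hA hta) (mul_le_mul_of_nonneg_left hB htb)
    · -- γ = 1
      have hγ1 : γ = 1 := le_antisymm hγmem.2 h1
      rw [hγ1, Gmu_one]
      have h2 := Gmu_nonneg μ a; have h3 := Gmu_nonneg μ b
      have := mul_nonneg hta h2; have := mul_nonneg htb h3
      linarith
  · -- γ = 0
    have hγ0 : γ = 0 := le_antisymm h0 hγmem.1
    have hsum : ta * a + tb * b = 0 := by rw [← hγdef]; exact hγ0
    have hn1 := mul_nonneg hta ha.1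
    have hn2 := mul_nonneg htb hb.1
    have h1 : ta * a = 0 := by linarith
    have h2 : tb * b = 0 := by linarith
    have e1 : ta * Gmu μ a = ta := by
      rcases mul_eq_zero.mp h1 with h | h
      · simp [h]
      · rw [h, Gmu_zero, mul_one]
    have e2 : tb * Gmu μ b = tb := by
      rcases mul_eq_zero.mp h2 with h | h
      · simp [h]
      · rw [h, Gmu_zero, mul_one]
    rw [hγ0, Gmu_zero, e1, e2]
    linarith

lemma Gmu_anti (μ : ℝ) (hμ : 0 ≤ μ) : AntitoneOn (Gmu μ) (Icc 0 1) := by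
  intro a ha b hb hab
  rcases le_or_gt a 0 with h0 | h0
  · have h : a = 0 := le_antisymm h0 ha.1
    rw [h, Gmu_zero]; exact Gmu_le_one μ b
  rcases le_or_gt 1 b with h1 | h1
  · have h : b = 1 := le_antisymm hb.2 h1
    rw [h, Gmu_one]; exact Gmu_nonneg μ a
  have ha1 : a < 1 := lt_of_le_of_lt hab h1
  have hb0 : 0 < b := lt_of_lt_of_le h0 hab
  rw [Gmu_interior μ a h0 ha1, Gmu_interior μ b hb0 h1]
  apply Phi_strictMono.monotone
  have hxa := Phi_invFun (show (1 - a) ∈ Ioo (0:ℝ) 1 from ⟨by linarith, by linarith⟩)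
  have hxb := Phi_invFun (show (1 - b) ∈ Ioo (0:ℝ) 1 from ⟨by linarith, by linarith⟩)
  have hle : stdGaussianCDF (Function.invFun stdGaussianCDF (1 - b))
      ≤ stdGaussianCDF (Function.invFun stdGaussianCDF (1 - a)) := by
    rw [hxa, hxb]; linarith
  have := Phi_strictMono.le_iff_le.mp hle
  linarith

lemma Gmu_contOn (μ : ℝ) (hμ : 0 ≤ μ) : ContinuousOn (Gmu μ) (Icc 0 1) := by
  have hconv := Gmu_convex μ hμ
  have hIoo : ContinuousOn (Gmu μ) (Ioo 0 1) :=
    (hconv.subset Ioo_subset_Icc_self (convex_Ioo 0 1)).continuousOn isOpen_Ioo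
  intro x hx
  rcases lt_or_ge 0 x with hx0 | hx0
  · rcases lt_or_ge x 1 with hx1 | hx1
    · exact (hIoo.continuousAt (isOpen_Ioo.mem_nhds ⟨hx0, hx1⟩)).continuousWithinAt
    · -- x = 1
      have hx1' : x = 1 := le_antisymm hx.2 hx1
      subst hx1'
      have hsq : Tendsto (Gmu μ) (𝓝[Icc (0:ℝ) 1] 1) (𝓝 0) := by
        have hupper : Tendsto (fun α : ℝ => 1 - α) (𝓝[Icc (0:ℝ) 1] 1) (𝓝 0) := by
          have : Tendsto (fun α : ℝ => 1 - α) (𝓝 1) (𝓝 (1 - 1)) :=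
            (continuous_const.sub continuous_id).tendsto 1
          simpa using this.mono_left nhdsWithin_le_nhds
        refine tendsto_of_tendsto_of_tendsto_of_le_of_le' tendsto_const_nhds hupper
          (Eventually.of_forall fun α => Gmu_nonneg μ α) ?_
        exact eventually_mem_nhdsWithin.mono fun α hα => Gmu_le_linear μ hμ hα
      show Tendsto (Gmu μ) (𝓝[Icc (0:ℝ) 1] 1) (𝓝 (Gmu μ 1))
      rw [Gmu_one]
      exact hsq
  · -- x = 0
    have hx0' : x = 0 := le_antisymm hx0 hx.1
    subst hx0'
    have hsq : Tendsto (Gmu μ) (𝓝[Icc (0:ℝ) 1] 0) (𝓝 1) := by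
      rw [tendsto_order]
      constructor
      · intro b hb
        obtain ⟨s, hs⟩ : ∃ s, b + (1 - b)/2 < stdGaussianCDF (s - μ) := by
          have ht := Phi_tendsto_atTop.comp (tendsto_atTop_add_const_right _ (-μ) tendsto_id)
          exact (ht.eventually_const_lt (by linarith)).exists
        set c := Real.exp (μ * s - μ^2/2) with hcdef
        have hc : 0 < c := Real.exp_pos _
        have htc : Tendsto (fun α : ℝ => c * α) (𝓝[Icc (0:ℝ) 1] 0) (𝓝 0) := by
          have : Tendsto (fun α : ℝ => c * α) (𝓝 0) (𝓝 (c * 0)) :=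
            (continuous_const.mul continuous_id).tendsto 0
          simpa using this.mono_left nhdsWithin_le_nhds
        filter_upwards [htc.eventually_lt_const (show (0:ℝ) < (1 - b)/2 by linarith),
          eventually_mem_nhdsWithin] with α h1 h2
        have hsup := support μ hμ s h2
        have hΦs := Phi_mem s
        have hring : c * ((1 - stdGaussianCDF s) - α)
            = c * (1 - stdGaussianCDF s) - c * α := by ring
        have hpos : 0 ≤ c * (1 - stdGaussianCDF s) :=
          mul_nonneg hc.le (by linarith [hΦs.2])
        linarith
      · intro b hb
        filter_upwards with α using lt_of_le_of_lt (Gmu_le_one μ α) hb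
    show Tendsto (Gmu μ) (𝓝[Icc (0:ℝ) 1] 0) (𝓝 (Gmu μ 0))
    rw [Gmu_zero]
    exact hsq

theorem stmt_6 (μ : ℝ) (hμ : 0 ≤ μ) :
    ConvexOn ℝ (Set.Icc 0 1) (Gmu μ) ∧
    ContinuousOn (Gmu μ) (Set.Icc 0 1) ∧
    AntitoneOn (Gmu μ) (Set.Icc 0 1) ∧
    (∀ α ∈ Set.Icc (0 : ℝ) 1, Gmu μ α ≤ 1 - α) := by
  exact ⟨Gmu_convex μ hμ, Gmu_contOn μ hμ, Gmu_anti μ hμ, fun α hα => Gmu_le_linear μ hμ hα⟩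
end

section
/- For μ > 0, the function δ(ε) = Φ(-ε/μ + μ/2) - e^ε·Φ(-ε/μ - μ/2) is non-negative and non-increasing in ε on [0, ∞), and δ(ε) → 0 as ε → ∞. -/
open ProbabilityTheory Filter

open MeasureTheory Set Real

lemma stdGaussianCDF_eq_cdf (x : ℝ) : stdGaussianCDF x = cdf (gaussianReal 0 1) x :=
  (cdf_eq_real _ x).symm

lemma stdGaussianCDF_eq_integral (x : ℝ) :
    stdGaussianCDF x = ∫ t in Iic x, gaussianPDFReal 0 1 t := by
  rw [stdGaussianCDF, gaussianReal_apply_eq_integral 0 one_ne_zero,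
    ENNReal.toReal_ofReal
      (setIntegral_nonneg measurableSet_Iic fun t _ => gaussianPDFReal_nonneg _ _ _)]

lemma shifted_integral (b m : ℝ) :
    ∫ t in Iic b, gaussianPDFReal m 1 t = stdGaussianCDF (b - m) := by
  have h1 : (gaussianReal 0 1).map (· + m) = gaussianReal m 1 := by
    simpa using gaussianReal_map_add_const (μ := 0) (v := 1) m
  have h2 : (gaussianReal m 1) (Iic b) = (gaussianReal 0 1) (Iic (b - m)) := by
    rw [← h1, Measure.map_apply (measurable_id'.add_const m) measurableSet_Iic]
    rw [Set.preimage_add_const_Iic]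
  have h3 : ((gaussianReal m 1) (Iic b)).toReal = stdGaussianCDF (b - m) := by
    rw [h2]; rfl
  rw [← h3, gaussianReal_apply_eq_integral m one_ne_zero,
    ENNReal.toReal_ofReal
      (setIntegral_nonneg measurableSet_Iic fun t _ => gaussianPDFReal_nonneg _ _ _)]

lemma key_iff {μ : ℝ} (hμ : 0 < μ) (ε t : ℝ) :
    Real.exp ε * gaussianPDFReal 0 1 t ≤ gaussianPDFReal (-μ) 1 t ↔ t ≤ -ε / μ - μ / 2 := by
  have hC : (0:ℝ) < (Real.sqrt (2 * π))⁻¹ := by positivity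
  simp only [gaussianPDFReal, NNReal.coe_one, mul_one]
  rw [mul_comm (Real.exp ε), mul_assoc, mul_le_mul_iff_right₀ hC, ← Real.exp_add, Real.exp_le_exp]
  have hb : -ε / μ - μ / 2 = (-ε - μ^2/2) / μ := by field_simp
  rw [hb, le_div_iff₀ hμ]
  constructor
  · intro h; nlinarith
  · intro h; nlinarith

lemma integrable_max {μ : ℝ} (ε : ℝ) :
    Integrable (fun t => max 0 (gaussianPDFReal (-μ) 1 t - Real.exp ε * gaussianPDFReal 0 1 t)) := by
  refine (integrable_gaussianPDFReal (-μ) 1).mono ?_ (Filter.Eventually.of_forall fun t => ?_)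
  · exact (measurable_const.max ((measurable_gaussianPDFReal _ _).sub
      (measurable_const.mul (measurable_gaussianPDFReal _ _)))).aestronglyMeasurable
  · rw [Real.norm_eq_abs, Real.norm_eq_abs, abs_of_nonneg (le_max_left _ _),
      abs_of_nonneg (gaussianPDFReal_nonneg _ _ _)]
    refine max_le (gaussianPDFReal_nonneg _ _ _) ?_
    have := mul_nonneg (Real.exp_pos ε).le (gaussianPDFReal_nonneg 0 1 t)
    linarith

lemma delta_eq {μ : ℝ} (hμ : 0 < μ) (ε : ℝ) :
    stdGaussianCDF (-ε / μ + μ / 2) - Real.exp ε * stdGaussianCDF (-ε / μ - μ / 2)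
      = ∫ t, max 0 (gaussianPDFReal (-μ) 1 t - Real.exp ε * gaussianPDFReal 0 1 t) := by
  set b := -ε / μ - μ / 2 with hbdef
  have hi1 : IntegrableOn (fun t => gaussianPDFReal (-μ) 1 t) (Iic b) :=
    (integrable_gaussianPDFReal (-μ) 1).integrableOn
  have hi2 : IntegrableOn (fun t => Real.exp ε * gaussianPDFReal 0 1 t) (Iic b) :=
    ((integrable_gaussianPDFReal 0 1).const_mul _).integrableOn
  have hb : -ε / μ + μ / 2 = b - (-μ) := by rw [hbdef]; ring
  rw [hb, ← shifted_integral b (-μ), stdGaussianCDF_eq_integral, ← integral_const_mul,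
    ← integral_sub hi1 hi2]
  have h1 : ∫ t in Iic b, (gaussianPDFReal (-μ) 1 t - Real.exp ε * gaussianPDFReal 0 1 t)
      = ∫ t in Iic b, max 0 (gaussianPDFReal (-μ) 1 t - Real.exp ε * gaussianPDFReal 0 1 t) := by
    refine setIntegral_congr_fun measurableSet_Iic fun t ht => ?_
    rw [max_eq_right (sub_nonneg.2 ((key_iff hμ ε t).2 ht))]
  have h2 : ∫ t in Ioi b, max 0 (gaussianPDFReal (-μ) 1 t - Real.exp ε * gaussianPDFReal 0 1 t)
      = 0 := by
    rw [setIntegral_congr_fun measurableSet_Ioi (g := fun _ => (0:ℝ))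
      (fun t ht => max_eq_left (sub_nonpos.2 (le_of_not_ge fun hc =>
        absurd ((key_iff hμ ε t).1 hc) (not_le.2 ht))))]
    simp
  rw [h1, ← intervalIntegral.integral_Iic_add_Ioi ((integrable_max (μ := μ) ε).integrableOn)
    ((integrable_max (μ := μ) ε).integrableOn), h2, add_zero]

theorem stmt_7 (μ : ℝ) (hμ : 0 < μ) :
    (∀ ε : ℝ, 0 ≤ ε →
      0 ≤ stdGaussianCDF (-ε / μ + μ / 2) - Real.exp ε * stdGaussianCDF (-ε / μ - μ / 2)) ∧
    AntitoneOn (fun ε : ℝ =>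
      stdGaussianCDF (-ε / μ + μ / 2) - Real.exp ε * stdGaussianCDF (-ε / μ - μ / 2))
      (Set.Ici 0) ∧
    Tendsto (fun ε : ℝ =>
      stdGaussianCDF (-ε / μ + μ / 2) - Real.exp ε * stdGaussianCDF (-ε / μ - μ / 2))
      atTop (nhds 0) := by
  have hnonneg : ∀ ε : ℝ,
      0 ≤ stdGaussianCDF (-ε / μ + μ / 2) - Real.exp ε * stdGaussianCDF (-ε / μ - μ / 2) := by
    intro ε
    rw [delta_eq hμ]
    exact integral_nonneg fun t => le_max_left _ _
  refine ⟨fun ε _ => hnonneg ε, ?_, ?_⟩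
  · intro ε₁ _ ε₂ _ h12
    simp only
    rw [delta_eq hμ, delta_eq hμ]
    refine integral_mono (integrable_max ε₂) (integrable_max ε₁) fun t => ?_
    exact max_le_max le_rfl (sub_le_sub_left
      (mul_le_mul_of_nonneg_right (Real.exp_le_exp.2 h12) (gaussianPDFReal_nonneg _ _ _)) _)
  · have hupper : ∀ ε : ℝ,
        stdGaussianCDF (-ε / μ + μ / 2) - Real.exp ε * stdGaussianCDF (-ε / μ - μ / 2)
          ≤ stdGaussianCDF (-ε / μ + μ / 2) :=
      fun ε => sub_le_self _ (mul_nonneg (Real.exp_pos ε).le ENNReal.toReal_nonneg)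
    have harg : Tendsto (fun ε : ℝ => -ε / μ + μ / 2) atTop atBot := by
      apply tendsto_atBot_add_const_right
      exact (tendsto_neg_atTop_atBot).atBot_div_const hμ
    have htop : Tendsto (fun ε : ℝ => stdGaussianCDF (-ε / μ + μ / 2)) atTop (nhds 0) := by
      have := (tendsto_cdf_atBot (gaussianReal 0 1)).comp harg
      simpa [Function.comp_def, stdGaussianCDF_eq_cdf] using this
    exact tendsto_of_tendsto_of_tendsto_of_le_of_le tendsto_const_nhds htop
      hnonneg hupper
end

section
/- Let f: [0,1] → [0,1] be a non-increasing convex continuous function with f(x) ≤ 1-x. Then the double Fenchel conjugate (min{f, f^{-1}})^{**} is the greatest convex lower bound of min{f, f^{-1}}, it is itself a trade-off function, and satisfies (min{f, f^{-1}})^{**} ≤ f pointwise. -/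
/-- A trade-off function in the f-DP framework. -/
def IsTradeoff (f : ℝ → ℝ) : Prop :=
  ConvexOn ℝ (Set.Icc 0 1) f ∧
  ContinuousOn f (Set.Icc 0 1) ∧
  AntitoneOn f (Set.Icc 0 1) ∧
  (∀ x ∈ Set.Icc (0 : ℝ) 1, f x ∈ Set.Icc (0 : ℝ) 1) ∧
  (∀ x ∈ Set.Icc (0 : ℝ) 1, f x ≤ 1 - x)

/-- The "inverse" of a trade-off function: `f⁻¹(α) = inf {t ∈ [0,1] : f t ≤ α}`. -/
noncomputable def tradeoffInv (f : ℝ → ℝ) (α : ℝ) : ℝ :=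
  sInf {t : ℝ | t ∈ Set.Icc (0 : ℝ) 1 ∧ f t ≤ α}

/-- The family of convex lower bounds of `min f (tradeoffInv f)` on `[0,1]`. -/
def envFam (f : ℝ → ℝ) : Set (ℝ → ℝ) :=
  {h' | ConvexOn ℝ (Set.Icc 0 1) h' ∧
    ∀ y ∈ Set.Icc (0 : ℝ) 1, h' y ≤ min (f y) (tradeoffInv f y)}

/-- The convex envelope: pointwise sup of the family. -/
noncomputable def tEnv (f : ℝ → ℝ) (x : ℝ) : ℝ :=
  sSup ((fun h' : ℝ → ℝ => h' x) '' envFam f)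

section envLemmas

variable {f : ℝ → ℝ}

lemma inv_nonneg' (α : ℝ) : 0 ≤ tradeoffInv f α :=
  Real.sInf_nonneg (fun _ ht => ht.1.1)

lemma inv_bddBelow (α : ℝ) :
    BddBelow {t : ℝ | t ∈ Set.Icc (0 : ℝ) 1 ∧ f t ≤ α} :=
  ⟨0, fun _ ht => ht.1.1⟩

lemma min_nonneg' (hf : IsTradeoff f) {x : ℝ} (hx : x ∈ Set.Icc (0 : ℝ) 1) :
    0 ≤ min (f x) (tradeoffInv f x) :=
  le_min (hf.2.2.2.1 x hx).1 (inv_nonneg' x)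

lemma zero_mem_fam (hf : IsTradeoff f) : (fun _ : ℝ => (0 : ℝ)) ∈ envFam f :=
  ⟨convexOn_const 0 (convex_Icc 0 1), fun y hy => min_nonneg' hf hy⟩

lemma fam_image_nonempty (hf : IsTradeoff f) (x : ℝ) :
    ((fun h' : ℝ → ℝ => h' x) '' envFam f).Nonempty :=
  ⟨0, (fun _ : ℝ => (0 : ℝ)), zero_mem_fam hf, rfl⟩

lemma fam_image_bddAbove {x : ℝ} (hx : x ∈ Set.Icc (0 : ℝ) 1) :
    BddAbove ((fun h' : ℝ → ℝ => h' x) '' envFam f) := by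
  refine ⟨min (f x) (tradeoffInv f x), ?_⟩
  rintro _ ⟨h', hh', rfl⟩
  exact hh'.2 x hx

lemma le_tEnv {h' : ℝ → ℝ} (hh' : h' ∈ envFam f) {x : ℝ} (hx : x ∈ Set.Icc (0 : ℝ) 1) :
    h' x ≤ tEnv f x :=
  le_csSup (fam_image_bddAbove hx) ⟨h', hh', rfl⟩

lemma tEnv_le_min (hf : IsTradeoff f) {x : ℝ} (hx : x ∈ Set.Icc (0 : ℝ) 1) :
    tEnv f x ≤ min (f x) (tradeoffInv f x) := by
  refine csSup_le (fam_image_nonempty hf x) ?_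
  rintro _ ⟨h', hh', rfl⟩
  exact hh'.2 x hx

lemma tEnv_nonneg (hf : IsTradeoff f) {x : ℝ} (hx : x ∈ Set.Icc (0 : ℝ) 1) :
    0 ≤ tEnv f x :=
  le_tEnv (zero_mem_fam hf) hx

lemma tEnv_le_f (hf : IsTradeoff f) {x : ℝ} (hx : x ∈ Set.Icc (0 : ℝ) 1) :
    tEnv f x ≤ f x :=
  (tEnv_le_min hf hx).trans (min_le_left _ _)

lemma tEnv_convex (hf : IsTradeoff f) : ConvexOn ℝ (Set.Icc 0 1) (tEnv f) := by
  refine ⟨convex_Icc 0 1, ?_⟩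
  intro x hx y hy a b ha hb hab
  have hmem : a • x + b • y ∈ Set.Icc (0 : ℝ) 1 := (convex_Icc 0 1) hx hy ha hb hab
  refine csSup_le (fam_image_nonempty hf _) ?_
  rintro _ ⟨h', hh', rfl⟩
  calc h' (a • x + b • y) ≤ a • h' x + b • h' y := hh'.1.2 hx hy ha hb hab
    _ ≤ a • tEnv f x + b • tEnv f y := by
        simp only [smul_eq_mul]
        gcongr
        · exact le_tEnv hh' hx
        · exact le_tEnv hh' hy

lemma tEnv_one (hf : IsTradeoff f) : tEnv f 1 = 0 := by
  have h1 : (1 : ℝ) ∈ Set.Icc (0 : ℝ) 1 := ⟨zero_le_one, le_rfl⟩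
  have h2 : tEnv f 1 ≤ f 1 := tEnv_le_f hf h1
  have h3 : f 1 ≤ 1 - 1 := hf.2.2.2.2 1 h1
  have h4 : 0 ≤ tEnv f 1 := tEnv_nonneg hf h1
  linarith

lemma tEnv_antitone (hf : IsTradeoff f) : AntitoneOn (tEnv f) (Set.Icc 0 1) := by
  intro x hx y hy hxy
  rcases eq_or_lt_of_le hx.2 with hx1 | hx1
  · have : y = x := le_antisymm (by rw [hx1]; exact hy.2) hxy
    rw [this]
  · set a : ℝ := (1 - y) / (1 - x) with ha_def
    set b : ℝ := (y - x) / (1 - x) with hb_def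
    have hx1' : (0 : ℝ) < 1 - x := by linarith
    have ha : 0 ≤ a := div_nonneg (by linarith [hy.2]) hx1'.le
    have hb : 0 ≤ b := div_nonneg (by linarith) hx1'.le
    have hx1'' : (1 : ℝ) - x ≠ 0 := by linarith
    have hab : a + b = 1 := by
      rw [ha_def, hb_def, ← add_div,
        show (1 : ℝ) - y + (y - x) = 1 - x by ring, div_self hx1'']
    have h1 : (1 : ℝ) ∈ Set.Icc (0 : ℝ) 1 := ⟨zero_le_one, le_rfl⟩
    have key := (tEnv_convex hf).2 hx h1 ha hb hab
    have hxy' : a • x + b • (1 : ℝ) = y := by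
      rw [smul_eq_mul, smul_eq_mul, ha_def, hb_def]
      field_simp
      ring
    rw [hxy', tEnv_one hf] at key
    have ha1 : a ≤ 1 := by
      rw [ha_def]
      rw [div_le_one hx1']
      linarith
    have h0 : 0 ≤ tEnv f x := tEnv_nonneg hf hx
    simp only [smul_eq_mul] at key
    nlinarith

/-- Right-continuity of `tradeoffInv f` at 0: for every ε > 0 there is δ > 0 with
`tradeoffInv f δ ≥ tradeoffInv f 0 - ε`. -/
lemma inv_right_cont (hf : IsTradeoff f) {ε : ℝ} (hε : 0 < ε) :
    ∃ δ > 0, δ ≤ 1 ∧ tradeoffInv f 0 - ε ≤ tradeoffInv f δ := by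
  set T := tradeoffInv f 0 with hT
  rcases le_or_gt T ε with hTe | hTe
  · exact ⟨1, one_pos, le_rfl, by linarith [inv_nonneg' (f := f) 1]⟩
  · by_contra hcon
    push_neg at hcon
    have hT1 : T ≤ 1 := by
      rw [hT, tradeoffInv]
      refine csInf_le (inv_bddBelow 0) ⟨⟨zero_le_one, le_rfl⟩, ?_⟩
      have := hf.2.2.2.2 1 ⟨zero_le_one, le_rfl⟩
      linarith
    have hTmem : T - ε ∈ Set.Icc (0 : ℝ) 1 := ⟨by linarith, by linarith⟩
    have hkey : ∀ δ : ℝ, 0 < δ → f (T - ε) ≤ δ := by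
      intro δ hδ
      have hδ' := hcon (min δ 1) (lt_min hδ one_pos) (min_le_right _ _)
      have hne : {t : ℝ | t ∈ Set.Icc (0 : ℝ) 1 ∧ f t ≤ min δ 1}.Nonempty := by
        refine ⟨1, ⟨zero_le_one, le_rfl⟩, ?_⟩
        have := hf.2.2.2.2 1 ⟨zero_le_one, le_rfl⟩
        have : f 1 ≤ 0 := by linarith
        exact this.trans (le_min hδ.le zero_le_one)
      obtain ⟨t, ht, htlt⟩ := exists_lt_of_csInf_lt hne hδ'
      have : f (T - ε) ≤ f t := hf.2.2.1 ht.1 hTmem htlt.le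
      exact this.trans (ht.2.trans (min_le_left _ _))
    have hle0 : f (T - ε) ≤ 0 := le_of_forall_pos_le_add (by
      intro δ hδ
      simpa using hkey δ hδ)
    have : T ≤ T - ε := by
      rw [hT, tradeoffInv]
      exact csInf_le (inv_bddBelow 0) ⟨hTmem, hle0⟩
    linarith

/-- For every ε > 0 there is δ ∈ (0,1] with
`min (f δ) (inv δ) ≥ min (f 0) (inv 0) - ε`. -/
lemma min_right_cont (hf : IsTradeoff f) {ε : ℝ} (hε : 0 < ε) :
    ∃ δ > 0, δ ≤ 1 ∧
      min (f 0) (tradeoffInv f 0) - ε ≤ min (f δ) (tradeoffInv f δ) := by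
  -- δ₁ from continuity of f at 0
  have hc : ContinuousWithinAt f (Set.Icc 0 1) 0 := hf.2.1 0 ⟨le_rfl, zero_le_one⟩
  rw [Metric.continuousWithinAt_iff] at hc
  obtain ⟨δ₁, hδ₁, hδ₁'⟩ := hc ε hε
  obtain ⟨δ₂, hδ₂, hδ₂1, hδ₂'⟩ := inv_right_cont hf hε
  set δ := min (min (δ₁ / 2) 1) δ₂ with hδ_def
  have hδpos : 0 < δ := lt_min (lt_min (by linarith) one_pos) hδ₂
  have hδ1 : δ ≤ 1 := ((min_le_left _ _).trans (min_le_right _ _))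
  have hδmem : δ ∈ Set.Icc (0 : ℝ) 1 := ⟨hδpos.le, hδ1⟩
  refine ⟨δ, hδpos, hδ1, ?_⟩
  have hf0 : f 0 - ε ≤ f δ := by
    have hdist : dist δ 0 < δ₁ := by
      rw [Real.dist_eq, sub_zero, abs_of_pos hδpos]
      calc δ ≤ δ₁ / 2 := (min_le_left _ _).trans (min_le_left _ _)
        _ < δ₁ := by linarith
    have := hδ₁' hδmem hdist
    rw [Real.dist_eq] at this
    have := abs_lt.mp this
    linarith [this.1]
  have hinv : tradeoffInv f 0 - ε ≤ tradeoffInv f δ := by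
    refine hδ₂'.trans ?_
    -- inv δ₂ ≤ inv δ since δ ≤ δ₂
    rw [tradeoffInv, tradeoffInv]
    refine csInf_le_csInf (inv_bddBelow δ₂) ?_ ?_
    · refine ⟨1, ⟨zero_le_one, le_rfl⟩, ?_⟩
      have := hf.2.2.2.2 1 ⟨zero_le_one, le_rfl⟩
      linarith
    · intro t ht
      exact ⟨ht.1, ht.2.trans (min_le_right _ _)⟩
  rcases le_total (f δ) (tradeoffInv f δ) with h | h
  · rw [min_eq_left h]
    calc min (f 0) (tradeoffInv f 0) - ε ≤ f 0 - ε := by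
          linarith [min_le_left (f 0) (tradeoffInv f 0)]
      _ ≤ f δ := hf0
  · rw [min_eq_right h]
    calc min (f 0) (tradeoffInv f 0) - ε ≤ tradeoffInv f 0 - ε := by
          linarith [min_le_right (f 0) (tradeoffInv f 0)]
      _ ≤ tradeoffInv f δ := hinv

/-- The linear minorant trick: lower bound for `tEnv` near 0. -/
lemma tEnv_lower_near_zero (hf : IsTradeoff f) {ε : ℝ} (hε : 0 < ε) :
    ∃ δ > 0, ∀ x ∈ Set.Icc (0 : ℝ) 1, tEnv f 0 - ε - x / δ ≤ tEnv f x := by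
  obtain ⟨δ, hδpos, hδ1, hδ⟩ := min_right_cont hf hε
  set m0 := min (f 0) (tradeoffInv f 0) with hm0
  refine ⟨δ, hδpos, ?_⟩
  set ℓ : ℝ → ℝ := fun x => (m0 - ε) - x / δ with hℓ
  have hℓmem : ℓ ∈ envFam f := by
    constructor
    · -- affine, convex
      refine ⟨convex_Icc 0 1, ?_⟩
      intro x _ y _ a b ha hb hab
      simp only [hℓ, smul_eq_mul]
      have heq : a * ((m0 - ε) - x / δ) + b * ((m0 - ε) - y / δ)
          = (m0 - ε) - (a * x + b * y) / δ := by
        field_simp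
        linear_combination (m0 - ε) * δ * hab
      rw [heq]
    · intro y hy
      rcases le_or_gt y δ with hyδ | hyδ
      · -- ℓ y ≤ m0 - ε ≤ min (f δ) (inv δ) ≤ min (f y) (inv y)
        have h1 : ℓ y ≤ m0 - ε := by
          simp only [hℓ]
          have : 0 ≤ y / δ := div_nonneg hy.1 hδpos.le
          linarith
        refine h1.trans (hδ.trans ?_)
        have hfy : f δ ≤ f y := hf.2.2.1 hy ⟨hδpos.le, hδ1⟩ hyδ
        have hinvy : tradeoffInv f δ ≤ tradeoffInv f y := by
          rcases Set.eq_empty_or_nonempty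
              {t : ℝ | t ∈ Set.Icc (0 : ℝ) 1 ∧ f t ≤ y} with hemp | hne
          · -- then the set for 0 is also empty is not needed; inv y = 0 and
            -- the set for δ... careful: need inv δ ≤ inv y = 0.
            -- The set for δ contains 1 (f 1 ≤ 0 ≤ ...). But f 1 ≤ 0 ≤ y means 1 ∈ set y,
            -- contradicting emptiness.
            exfalso
            have h1y : (1 : ℝ) ∈ {t : ℝ | t ∈ Set.Icc (0 : ℝ) 1 ∧ f t ≤ y} := by
              refine ⟨⟨zero_le_one, le_rfl⟩, ?_⟩
              have := hf.2.2.2.2 1 ⟨zero_le_one, le_rfl⟩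
              linarith [hy.1]
            rw [hemp] at h1y
            exact h1y
          · rw [tradeoffInv, tradeoffInv]
            refine csInf_le_csInf (inv_bddBelow δ) hne ?_
            intro t ht
            exact ⟨ht.1, ht.2.trans hyδ⟩
        exact le_min ((min_le_left _ _).trans hfy) ((min_le_right _ _).trans hinvy)
      · -- y > δ : ℓ y < 0 ≤ min
        have hm01 : m0 ≤ 1 := by
          have := (hf.2.2.2.1 0 ⟨le_rfl, zero_le_one⟩).2
          calc m0 ≤ f 0 := min_le_left _ _
            _ ≤ 1 := this
        have : 1 < y / δ := by
          rw [lt_div_iff₀ hδpos]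
          linarith
        have hneg : ℓ y < 0 := by
          simp only [hℓ]
          linarith
        exact hneg.le.trans (min_nonneg' hf hy)
  intro x hx
  have := le_tEnv hℓmem hx
  have h0 : tEnv f 0 ≤ m0 := tEnv_le_min hf ⟨le_rfl, zero_le_one⟩
  simp only [hℓ] at this
  linarith

lemma tEnv_continuousOn (hf : IsTradeoff f) : ContinuousOn (tEnv f) (Set.Icc 0 1) := by
  intro x hx
  rcases eq_or_lt_of_le hx.1 with hx0 | hx0
  · -- x = 0
    rw [← hx0]
    rw [Metric.continuousWithinAt_iff]
    intro ε hε
    obtain ⟨δ₀, hδ₀, hδ₀'⟩ := tEnv_lower_near_zero hf (half_pos hε)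
    refine ⟨min δ₀ (δ₀ * (ε / 4)), lt_min hδ₀ (by positivity), ?_⟩
    intro y hy hdist
    have hy0 : 0 ≤ y := hy.1
    have hdy : y < min δ₀ (δ₀ * (ε / 4)) := by
      rw [Real.dist_eq, sub_zero, abs_of_nonneg hy0] at hdist
      exact hdist
    have h1 : tEnv f y ≤ tEnv f 0 := tEnv_antitone hf ⟨le_rfl, zero_le_one⟩ hy hy0
    have h2 : tEnv f 0 - ε / 2 - y / δ₀ ≤ tEnv f y := hδ₀' y hy
    have h3 : y / δ₀ < ε / 4 := by
      rw [div_lt_iff₀ hδ₀]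
      calc y < δ₀ * (ε / 4) := lt_of_lt_of_le hdy (min_le_right _ _)
        _ = ε / 4 * δ₀ := by ring
    rw [Real.dist_eq, abs_sub_comm, abs_of_nonneg (by linarith)]
    linarith
  · rcases eq_or_lt_of_le hx.2 with hx1 | hx1
    · -- x = 1
      rw [hx1]
      rw [Metric.continuousWithinAt_iff]
      intro ε hε
      refine ⟨ε, hε, ?_⟩
      intro y hy hdist
      have h1 : tEnv f 1 ≤ tEnv f y := tEnv_antitone hf hy ⟨zero_le_one, le_rfl⟩ hy.2
      have h2 : tEnv f y ≤ f y := tEnv_le_f hf hy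
      have h3 : f y ≤ 1 - y := hf.2.2.2.2 y hy
      have h4 : dist y 1 = 1 - y := by
        rw [Real.dist_eq, abs_sub_comm, abs_of_nonneg (by linarith [hy.2])]
      rw [Real.dist_eq, abs_of_nonneg (by linarith)]
      rw [h4] at hdist
      rw [tEnv_one hf]
      linarith
    · -- interior point
      have hmem : x ∈ Set.Ioo (0 : ℝ) 1 := ⟨hx0, hx1⟩
      have hco : ContinuousOn (tEnv f) (Set.Ioo 0 1) := by
        have := (tEnv_convex hf).continuousOn_interior
        rwa [interior_Icc] at this
      have : ContinuousAt (tEnv f) x :=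
        hco.continuousAt (isOpen_Ioo.mem_nhds hmem)
      exact this.continuousWithinAt

end envLemmas

theorem stmt_15 (f : ℝ → ℝ) (hf : IsTradeoff f) :
    ∃ h : ℝ → ℝ,
      -- h is the greatest convex lower bound of min{f, f⁻¹} on [0,1]
      (ConvexOn ℝ (Set.Icc 0 1) h ∧
        (∀ x ∈ Set.Icc (0 : ℝ) 1, h x ≤ min (f x) (tradeoffInv f x)) ∧
        (∀ h' : ℝ → ℝ, ConvexOn ℝ (Set.Icc 0 1) h' →
          (∀ x ∈ Set.Icc (0 : ℝ) 1, h' x ≤ min (f x) (tradeoffInv f x)) →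
          ∀ x ∈ Set.Icc (0 : ℝ) 1, h' x ≤ h x)) ∧
      -- h is itself a trade-off function
      IsTradeoff h ∧
      -- and h ≤ f pointwise on [0,1]
      (∀ x ∈ Set.Icc (0 : ℝ) 1, h x ≤ f x) := by
  refine ⟨tEnv f, ⟨tEnv_convex hf, fun x hx => tEnv_le_min hf hx, ?_⟩, ?_, ?_⟩
  · intro h' hc hb x hx
    exact le_tEnv ⟨hc, hb⟩ hx
  · refine ⟨tEnv_convex hf, tEnv_continuousOn hf, tEnv_antitone hf, ?_, ?_⟩
    · intro x hx
      refine ⟨tEnv_nonneg hf hx, ?_⟩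
      exact (tEnv_le_f hf hx).trans (hf.2.2.2.1 x hx).2
    · intro x hx
      exact (tEnv_le_f hf hx).trans (hf.2.2.2.2 x hx)
  · intro x hx
    exact tEnv_le_f hf hx
end
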